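/- If R is a right mininjective ring with ACC on right annihilators in which the right socle S_r is essential in R as a right R-module, then R/J(R) is a von Neumann regular ring. -/

import Mathlib

open MulOpposite in
/-- Right ideals of `R`, as submodules of `R` over `Rᵐᵒᵖ`. -/
abbrev RIdeal (R : Type*) [Ring R] := Submodule Rᵐᵒᵖ R

section Defs
variable (R : Type*) [Ring R]

/-- Left annihilator of a subset. -/
def lAnn (X : Set R) : Set R := {a | ∀ x ∈ X, a * x = 0}

/-- Right annihilator of a subset. -/
def rAnn (X : Set R) : Set R := {a | ∀ x ∈ X, x * a = 0}

/-- Right annihilator of a subset, as a right ideal. -/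
def rAnnI (X : Set R) : RIdeal R where
  carrier := rAnn R X
  add_mem' := by intro a b ha hb x hx; rw [mul_add, ha x hx, hb x hx, add_zero]
  zero_mem' := by intro x hx; rw [mul_zero]
  smul_mem' := by
    intro c a ha x hx
    show x * (a * c.unop) = 0
    rw [← mul_assoc, ha x hx, zero_mul]

/-- `R` is left P-injective: `rl(a) = aR` for every `a`. -/
def IsLeftPInjective : Prop :=
  ∀ a x : R, (∀ u : R, u * a = 0 → u * x = 0) ↔ ∃ s : R, x = a * s

/-- `R` is left 2-injective. -/
def IsLeft2Injective : Prop :=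
  ∀ (a b : R) (f : ↥(Submodule.span R ({a, b} : Set R)) →ₗ[R] R),
    ∃ g : R →ₗ[R] R, ∀ x : ↥(Submodule.span R ({a, b} : Set R)), g (x : R) = f x

/-- `R` is left FP-injective: every matrix ring over `R` is left P-injective. -/
def IsLeftFPInjective : Prop :=
  ∀ n : ℕ, IsLeftPInjective (Matrix (Fin n) (Fin n) R)

/-- A left ideal is small if `K + I = R` implies `K = R`. -/
def IsSmallLeftIdeal (I : Ideal R) : Prop := ∀ K : Ideal R, K ⊔ I = ⊤ → K = ⊤

/-- A complement left ideal: maximal with respect to intersecting some left ideal trivially. -/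
def IsComplementLeftIdeal (C : Ideal R) : Prop :=
  ∃ S : Ideal R, C ⊓ S = ⊥ ∧ ∀ C' : Ideal R, C ≤ C' → C' ⊓ S = ⊥ → C' = C

/-- A right ideal is essential in `R`. -/
def IsEssentialRIdeal (I : RIdeal R) : Prop := ∀ K : RIdeal R, K ⊓ I = ⊥ → K = ⊥

/-- The right socle: the sum of all simple (minimal) right ideals. -/
def rSocle : RIdeal R := sSup {m : RIdeal R | IsSimpleModule Rᵐᵒᵖ m}

/-- The right singular ideal. -/
def rSingular : Set R := {a | IsEssentialRIdeal R (rAnnI R {a})}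

/-- ACC on right annihilators. -/
def ACCOnRightAnnihilators : Prop :=
  ∀ f : ℕ → Set R, (∀ n, ∃ X : Set R, f n = rAnn R X) → (∀ n, f n ⊆ f (n + 1)) →
    ∃ n, ∀ m, n ≤ m → f m = f n

/-- The Jacobson radical, as a set. -/
def jacobsonSet : Set R := (TwoSidedIdeal.jacobson (⊥ : TwoSidedIdeal R) : Set R)

/-- A subset is nilpotent if products of some fixed length of its elements vanish. -/
def IsNilpotentSet (J : Set R) : Prop :=
  ∃ n : ℕ, ∀ f : Fin (n + 1) → R, (∀ i, f i ∈ J) → (List.ofFn f).prod = 0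

/-- `R` is quasi-Frobenius: left noetherian and left self-injective. -/
def IsQuasiFrobenius : Prop := IsNoetherianRing R ∧ Module.Injective R R

/-- `R` is right mininjective. -/
def IsRightMininjective : Prop :=
  ∀ (I : RIdeal R), IsSimpleModule Rᵐᵒᵖ I → ∀ f : I →ₗ[Rᵐᵒᵖ] R,
    ∃ c : R, ∀ x : I, f x = c * (x : R)

/-- `R` is left mininjective. -/
def IsLeftMininjective : Prop :=
  ∀ (I : Ideal R), IsSimpleModule R I → ∀ f : I →ₗ[R] R,
    ∃ c : R, ∀ x : I, f x = (x : R) * c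

/-- `R` is right simple injective. -/
def IsRightSimpleInjective : Prop :=
  ∀ (I : RIdeal R) (f : I →ₗ[Rᵐᵒᵖ] R), IsSimpleModule Rᵐᵒᵖ (LinearMap.range f) →
    ∃ c : R, ∀ x : I, f x = c * (x : R)

/-- `R` is left CS: every left ideal is essential in a direct summand of `R`. -/
def IsLeftCS : Prop :=
  ∀ I : Ideal R, ∃ K : Ideal R, (∃ K' : Ideal R, IsCompl K K') ∧ I ≤ K ∧
    ∀ L : Ideal R, L ≤ K → L ⊓ I = ⊥ → L = ⊥

/-- `R` is left min-CS: every minimal left ideal is essential in a direct summand. -/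
def IsLeftMinCS : Prop :=
  ∀ I : Ideal R, IsSimpleModule R I → ∃ K : Ideal R, (∃ K' : Ideal R, IsCompl K K') ∧ I ≤ K ∧
    ∀ L : Ideal R, L ≤ K → L ⊓ I = ⊥ → L = ⊥

/-- `R` is right Johns: right noetherian and every right ideal is a right annihilator. -/
def IsRightJohns : Prop :=
  IsNoetherianRing Rᵐᵒᵖ ∧ ∀ I : RIdeal R, ∃ X : Set R, (I : Set R) = rAnn R X

end Defs

section MoreDefs
variable (R : Type*) [Ring R]

/-- Left annihilator of a subset, as a left ideal. -/
def lAnnI (X : Set R) : Ideal R where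
  carrier := lAnn R X
  add_mem' := by intro a b ha hb x hx; rw [add_mul, ha x hx, hb x hx, add_zero]
  zero_mem' := by intro x hx; rw [zero_mul]
  smul_mem' := by
    intro c a ha x hx
    show c * a * x = 0
    rw [mul_assoc, ha x hx, mul_zero]

/-- A left ideal is essential in `R`. -/
def IsEssentialLIdeal (I : Ideal R) : Prop := ∀ K : Ideal R, K ⊓ I = ⊥ → K = ⊥

/-- The left singular ideal `Z_l`. -/
def lSingular : Set R := {a | IsEssentialLIdeal R (lAnnI R {a})}

end MoreDefs

section Aux

open Submodule MulOpposite

variable {R : Type*} [Ring R]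

/-- `k` generates a simple right ideal. -/
def SGr (k : R) : Prop := k ≠ 0 ∧ ∀ s : R, k * s ≠ 0 → ∃ t : R, k = k * s * t

lemma mem_spanOp {u x : R} :
    x ∈ Submodule.span Rᵐᵒᵖ ({u} : Set R) ↔ ∃ s : R, x = u * s := by
  rw [Submodule.mem_span_singleton]
  constructor
  · rintro ⟨a, rfl⟩; exact ⟨a.unop, rfl⟩
  · rintro ⟨s, rfl⟩; exact ⟨op s, rfl⟩

lemma sub_simple_eq {A M : Type*} [Ring A] [AddCommGroup M] [Module A M]
    {m N : Submodule A M} (hm : IsSimpleModule A m) (hN : N ≤ m) : N = ⊥ ∨ N = m := by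
  rcases hm.1.2 (N.comap m.subtype) with h | h
  · left
    rw [eq_bot_iff]
    intro x hx
    have : (⟨x, hN hx⟩ : m) ∈ N.comap m.subtype := hx
    rw [h] at this
    simpa using this
  · right
    refine le_antisymm hN fun x hx => ?_
    have : (⟨x, hx⟩ : m) ∈ N.comap m.subtype := h ▸ trivial
    exact this

lemma SGr_of_simple {k : R}
    (hm : IsSimpleModule Rᵐᵒᵖ (Submodule.span Rᵐᵒᵖ ({k} : Set R))) : SGr k := by
  have hk0 : k ≠ 0 := by
    rintro rfl
    have := hm.nontrivial
    obtain ⟨x, y, hxy⟩ := this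
    apply hxy
    obtain ⟨s, hs⟩ := mem_spanOp.mp x.2
    obtain ⟨t, ht⟩ := mem_spanOp.mp y.2
    ext
    simp [hs, ht]
  refine ⟨hk0, fun s hs => ?_⟩
  have h1 : Submodule.span Rᵐᵒᵖ ({k * s} : Set R) ≤ Submodule.span Rᵐᵒᵖ ({k} : Set R) :=
    Submodule.span_le.mpr (by simpa using mem_spanOp.mpr ⟨s, rfl⟩)
  rcases sub_simple_eq hm h1 with h | h
  · exfalso
    exact hs (by simpa using h.le (Submodule.mem_span_singleton_self (k * s)))
  · have : k ∈ Submodule.span Rᵐᵒᵖ ({k * s} : Set R) :=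
      h.ge (Submodule.mem_span_singleton_self k)
    obtain ⟨t, ht⟩ := mem_spanOp.mp this
    exact ⟨t, ht⟩

lemma simple_of_SGr {k : R} (hk : SGr k) :
    IsSimpleModule Rᵐᵒᵖ (Submodule.span Rᵐᵒᵖ ({k} : Set R)) := by
  set m : Submodule Rᵐᵒᵖ R := Submodule.span Rᵐᵒᵖ ({k} : Set R) with hmdef
  have hkm : k ∈ m := Submodule.mem_span_singleton_self k
  have hbt : (⊥ : Submodule Rᵐᵒᵖ m) ≠ ⊤ := by
    intro h
    have : (⟨k, hkm⟩ : m) ∈ (⊥ : Submodule Rᵐᵒᵖ m) := h ▸ trivial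
    rw [Submodule.mem_bot] at this
    exact hk.1 (by simpa using congrArg Subtype.val this)
  haveI : Nontrivial (Submodule Rᵐᵒᵖ m) := nontrivial_of_ne ⊥ ⊤ hbt
  refine (isSimpleModule_iff _ _).mpr ⟨fun N => ?_⟩
  rcases eq_or_ne N ⊥ with h | h
  · exact Or.inl h
  · right
    obtain ⟨x, hxN, hx0⟩ := Submodule.exists_mem_ne_zero_of_ne_bot h
    obtain ⟨s, hs⟩ := mem_spanOp.mp x.2
    have hks : k * s ≠ 0 := by
      rw [← hs]
      intro hc
      exact hx0 (Subtype.ext hc)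
    obtain ⟨t, ht⟩ := hk.2 s hks
    have hkN : (⟨k, hkm⟩ : m) ∈ N := by
      have hsm : (op t) • x ∈ N := N.smul_mem _ hxN
      have : ((op t) • x : m) = ⟨k, hkm⟩ := by
        ext
        show (x : R) * t = k
        rw [hs]
        exact ht.symm
      rwa [this] at hsm
    rw [eq_top_iff]
    rintro y -
    obtain ⟨s', hs'⟩ := mem_spanOp.mp y.2
    have : ((op s') • (⟨k, hkm⟩ : m)) = y := by
      ext
      show k * s' = (y : R)
      rw [hs']
    rw [← this]
    exact N.smul_mem _ hkN

lemma SGr_of_mem_simple {m : Submodule Rᵐᵒᵖ R} (hm : IsSimpleModule Rᵐᵒᵖ m)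
    {s : R} (hs : s ∈ m) (h0 : s ≠ 0) : SGr s := by
  have h1 : Submodule.span Rᵐᵒᵖ ({s} : Set R) ≤ m := Submodule.span_le.mpr (by simpa)
  rcases sub_simple_eq hm h1 with h | h
  · exact absurd (by simpa using h.le (Submodule.mem_span_singleton_self s)) h0
  · exact SGr_of_simple (h ▸ hm)

lemma exists_extMap (u k : R) (hcancel : ∀ r : R, u * r = 0 → k * r = 0) :
    ∃ f : (Submodule.span Rᵐᵒᵖ ({u} : Set R)) →ₗ[Rᵐᵒᵖ] R,
      ∀ (x : Submodule.span Rᵐᵒᵖ ({u} : Set R)) (r : R), (x : R) = u * r → f x = k * r := by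
  classical
  have key : ∀ x : Submodule.span Rᵐᵒᵖ ({u} : Set R), ∃ r : R, (x : R) = u * r :=
    fun x => mem_spanOp.mp x.2
  choose g hg using key
  have hdiff : ∀ (x : Submodule.span Rᵐᵒᵖ ({u} : Set R)) (r : R),
      (x : R) = u * r → k * g x = k * r := by
    intro x r h
    have h1 : u * (g x - r) = 0 := by rw [mul_sub, ← hg x, ← h, sub_self]
    have h2 := hcancel _ h1
    rw [mul_sub, sub_eq_zero] at h2
    exact h2
  refine ⟨⟨⟨fun x => k * g x, fun x y => ?_⟩, fun c x => ?_⟩, fun x r h => hdiff x r h⟩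
  · have : ((x + y : Submodule.span Rᵐᵒᵖ ({u} : Set R)) : R) = u * (g x + g y) := by
      rw [mul_add, ← hg x, ← hg y]; rfl
    show k * g (x + y) = k * g x + k * g y
    rw [hdiff _ _ this, mul_add]
  · have : ((c • x : Submodule.span Rᵐᵒᵖ ({u} : Set R)) : R) = u * (g x * c.unop) := by
      show (x : R) * c.unop = u * (g x * c.unop)
      rw [hg x, mul_assoc]
    show k * g (c • x) = c • (k * g x)
    rw [hdiff _ _ this]
    show k * (g x * c.unop) = (k * g x) * c.unop
    rw [mul_assoc]

end Aux

section Aux2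

open Submodule MulOpposite

variable {R : Type*} [Ring R]

lemma SGl_of_SGr (hmin : IsRightMininjective R) {k : R} (hk : SGr k) :
    ∀ s : R, s * k ≠ 0 → ∃ t : R, k = t * (s * k) := by
  intro s hs
  set u := s * k with hu
  have hcancel : ∀ r : R, u * r = 0 → k * r = 0 := by
    intro r hur
    by_contra hkr
    obtain ⟨t, ht⟩ := hk.2 r hkr
    apply hs
    calc s * k = s * (k * r * t) := by rw [← ht]
    _ = (u * r) * t := by rw [hu]; noncomm_ring
    _ = 0 := by rw [hur, zero_mul]
  have husg : SGr u := by
    refine ⟨hs, fun s' hs' => ?_⟩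
    have hks' : k * s' ≠ 0 := by
      intro hc
      apply hs'
      rw [hu, mul_assoc, hc, mul_zero]
    obtain ⟨t, ht⟩ := hk.2 s' hks'
    refine ⟨t, ?_⟩
    calc u = s * k := hu
    _ = s * (k * s' * t) := by rw [← ht]
    _ = u * s' * t := by rw [hu]; noncomm_ring
  obtain ⟨f, hf⟩ := exists_extMap u k hcancel
  obtain ⟨c, hc⟩ := hmin _ (simple_of_SGr husg) f
  have hself : (⟨u, Submodule.mem_span_singleton_self u⟩ :
      Submodule.span Rᵐᵒᵖ ({u} : Set R)) = ⟨u, Submodule.mem_span_singleton_self u⟩ := rfl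
  have h1 : f ⟨u, Submodule.mem_span_singleton_self u⟩ = k * 1 :=
    hf _ 1 (by rw [mul_one])
  have h2 : f ⟨u, Submodule.mem_span_singleton_self u⟩ = c * u :=
    hc ⟨u, Submodule.mem_span_singleton_self u⟩
  refine ⟨c, ?_⟩
  rw [← h2, h1, mul_one]

lemma coatom_lAnn (hmin : IsRightMininjective R) {k : R} (hk : SGr k) :
    IsCoatom (lAnnI R ({k} : Set R)) := by
  constructor
  · intro htop
    have h1 : (1 : R) ∈ lAnnI R ({k} : Set R) := htop ▸ trivial
    have := h1 k rfl
    rw [one_mul] at this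
    exact hk.1 this
  · intro J hJ
    obtain ⟨s, hsJ, hsn⟩ := SetLike.exists_of_lt hJ
    have hsk : s * k ≠ 0 := by
      intro h
      exact hsn (by rintro x rfl; exact h)
    obtain ⟨t, ht⟩ := SGl_of_SGr hmin hk s hsk
    rw [eq_top_iff]
    rintro r -
    have h1 : (1 : R) - t * s ∈ lAnnI R ({k} : Set R) := by
      rintro x rfl
      rw [sub_mul, one_mul, mul_assoc, ← ht, sub_self]
    have h2 : (1 : R) ∈ J := by
      have := J.add_mem (hJ.le h1) (J.smul_mem t hsJ)
      simpa using this
    simpa using J.smul_mem r h2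

lemma subset_rAnn_lAnn (X : Set R) : X ⊆ rAnn R (lAnn R X) := fun x hx b hb => hb x hx

lemma lAnn_anti {X Y : Set R} (h : X ⊆ Y) : lAnn R Y ⊆ lAnn R X := fun b hb x hx => hb x (h hx)

lemma rAnn_anti {X Y : Set R} (h : X ⊆ Y) : rAnn R Y ⊆ rAnn R X := fun b hb x hx => hb x (h hx)

lemma lAnn_rAnn_lAnn (X : Set R) : lAnn R (rAnn R (lAnn R X)) = lAnn R X := by
  refine le_antisymm (lAnn_anti (subset_rAnn_lAnn X)) ?_
  intro a ha y hy
  exact hy a ha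

lemma exists_maximal_rAnn (hacc : ACCOnRightAnnihilators R) (𝒜 : Set (Set R))
    (hne : 𝒜.Nonempty) (hform : ∀ A ∈ 𝒜, ∃ X, A = rAnn R X) :
    ∃ A ∈ 𝒜, ∀ B ∈ 𝒜, A ⊆ B → B = A := by
  by_contra hcon
  push_neg at hcon
  obtain ⟨A₀, hA₀⟩ := hne
  have step : ∀ A : {A // A ∈ 𝒜}, ∃ B : {A // A ∈ 𝒜}, A.1 ⊆ B.1 ∧ B.1 ≠ A.1 := by
    intro A
    obtain ⟨B, hB, hAB, hBA⟩ := hcon A.1 A.2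
    exact ⟨⟨B, hB⟩, hAB, hBA⟩
  choose nxt hsub hne' using step
  let f : ℕ → {A // A ∈ 𝒜} := fun n => Nat.rec ⟨A₀, hA₀⟩ (fun _ B => nxt B) n
  obtain ⟨n, hn⟩ := hacc (fun n => (f n).1) (fun n => hform _ (f n).2) (fun n => hsub (f n))
  exact hne' (f n) (hn (n + 1) (Nat.le_succ n))

lemma nilpotent_of_kills_socle (hacc : ACCOnRightAnnihilators R)
    (hess : IsEssentialRIdeal R (rSocle R)) {w : R}
    (hw : ∀ s ∈ rSocle R, w * s = 0) : IsNilpotent w := by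
  have hmono : ∀ m, rAnn R {w ^ (m + 1)} ⊆ rAnn R {w ^ (m + 1 + 1)} := by
    intro m x hx y hy
    rcases hy
    have h1 : w ^ (m + 1) * x = 0 := hx _ rfl
    rw [pow_succ', mul_assoc, h1, mul_zero]
  obtain ⟨n, hn⟩ := hacc (fun m => rAnn R {w ^ (m + 1)}) (fun m => ⟨_, rfl⟩) hmono
  · refine ⟨n + 1, ?_⟩
    have hstab : rAnn R {w ^ (n + 2)} = rAnn R {w ^ (n + 1)} := hn (n + 1) (Nat.le_succ n)
    have hbot : Submodule.span Rᵐᵒᵖ ({w ^ (n + 1)} : Set R) ⊓ rSocle R = ⊥ := by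
      rw [eq_bot_iff]
      rintro x ⟨hx1, hx2⟩
      obtain ⟨s, rfl⟩ := mem_spanOp.mp hx1
      have h1 : w * (w ^ (n + 1) * s) = 0 := hw _ hx2
      have h2 : w ^ (n + 2) * s = 0 := by
        rw [pow_succ']
        rw [mul_assoc]
        exact h1
      have h3 : s ∈ rAnn R {w ^ (n + 1)} := by
        rw [← hstab]
        rintro x rfl
        exact h2
      have := h3 (w ^ (n + 1)) rfl
      simpa using this
    have hKbot := hess _ hbot
    have : w ^ (n + 1) ∈ (⊥ : Submodule Rᵐᵒᵖ R) :=
      hKbot ▸ Submodule.mem_span_singleton_self _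
    simpa using this

lemma pi_semisimple {ι : Type*} [Finite ι] [DecidableEq ι] (φ : ι → Type*) [∀ i, AddCommGroup (φ i)]
    [∀ i, Module R (φ i)] [∀ i, IsSimpleModule R (φ i)] :
    IsSemisimpleModule R (∀ i, φ i) := by
  apply isSemisimpleModule_of_isSemisimpleModule_submodule'
    (p := fun i => LinearMap.range (LinearMap.single R φ i))
  · intro i
    haveI : IsSemisimpleModule R (φ i) := by
      apply IsSemisimpleModule.of_sSup_simples_eq_top
      apply top_unique
      exact le_sSup (show IsSimpleModule R (⊤ : Submodule R (φ i)) from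
        .congr Submodule.topEquiv)
    exact IsSemisimpleModule.congr
      (LinearEquiv.ofInjective (LinearMap.single R φ i) (Pi.single_injective (M := φ) i)).symm
  · exact LinearMap.iSup_range_single R φ

end Aux2

section MainAux

open Submodule MulOpposite

variable {R : Type*} [Ring R]

lemma mem_lAnnI {X : Set R} {x : R} : x ∈ lAnnI R X ↔ ∀ z ∈ X, x * z = 0 := Iff.rfl

end MainAux

/-- Right mininjective with ACC on right annihilators and essential right socle:
`R/J` is von Neumann regular. -/
theorem stmt14 {R : Type*} [Ring R] (hmin : IsRightMininjective R)
    (hacc : ACCOnRightAnnihilators R) (hess : IsEssentialRIdeal R (rSocle R)) :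
    ∀ a : R, ∃ b : R, a - a * b * a ∈ jacobsonSet R := by
  classical
  intro a
  set 𝒜 : Set (Set R) :=
    {A | ∃ F : Finset R, (∀ k ∈ F, SGr k) ∧ A = rAnn R (lAnn R ↑F)} with h𝒜
  have hne : 𝒜.Nonempty := ⟨rAnn R (lAnn R (↑(∅ : Finset R) : Set R)), ∅, by simp, rfl⟩
  obtain ⟨A₀, hA₀mem, hA₀max⟩ := exists_maximal_rAnn hacc 𝒜 hne
    (by rintro A ⟨F, -, rfl⟩; exact ⟨_, rfl⟩)
  obtain ⟨F₀, hF₀G, hA₀⟩ := hA₀mem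
  -- key minimality property
  have hkey : ∀ k : R, SGr k → lAnn R (↑F₀ : Set R) ⊆ lAnn R {k} := by
    intro k hk
    have h1 : lAnn R (↑(insert k F₀ : Finset R) : Set R) ⊆ lAnn R ↑F₀ :=
      lAnn_anti (by intro x hx; simp [Finset.mem_insert]; tauto)
    have hmem : rAnn R (lAnn R (↑(insert k F₀ : Finset R) : Set R)) ∈ 𝒜 :=
      ⟨insert k F₀, by
        intro x hx
        rcases Finset.mem_insert.mp hx with rfl | h
        exacts [hk, hF₀G x h], rfl⟩
    have heq := hA₀max _ hmem (hA₀ ▸ rAnn_anti h1)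
    have h2 : lAnn R (↑(insert k F₀ : Finset R) : Set R) = lAnn R ↑F₀ := by
      have := congrArg (lAnn R) (heq.trans hA₀)
      rwa [lAnn_rAnn_lAnn, lAnn_rAnn_lAnn] at this
    rw [← h2]
    exact lAnn_anti (by simp)
  -- elements of lAnn F₀ kill the socle
  have hLS : ∀ x ∈ lAnn R (↑F₀ : Set R), ∀ s ∈ rSocle R, x * s = 0 := by
    intro x hx s hs
    unfold rSocle at hs
    rw [sSup_eq_iSup, iSup_subtype'] at hs
    refine Submodule.iSup_induction (motive := fun z => x * z = 0) _ hs ?_ (by exact mul_zero x) ?_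
    · rintro ⟨m, hm⟩ z hz
      rcases eq_or_ne z 0 with rfl | h0
      · rw [mul_zero]
      · exact hkey z (SGr_of_mem_simple hm hz h0) hx z rfl
    · intro y z hy hz
      rw [mul_add, hy, hz, add_zero]
  -- lAnn F₀ is contained in the Jacobson radical
  have hLJ : ∀ x ∈ lAnn R (↑F₀ : Set R), x ∈ jacobsonSet R := by
    intro x hx
    show x ∈ (TwoSidedIdeal.jacobson (⊥ : TwoSidedIdeal R) : Set R)
    rw [SetLike.mem_coe, TwoSidedIdeal.mem_jacobson_iff]
    intro y
    have hyx : y * x ∈ lAnn R (↑F₀ : Set R) := by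
      intro z hz
      rw [mul_assoc, hx z hz, mul_zero]
    have hnil : IsNilpotent (y * x) :=
      nilpotent_of_kills_socle hacc hess (fun s hs => hLS _ hyx s hs)
    obtain ⟨u, hu⟩ := hnil.isUnit_add_one
    refine ⟨↑u⁻¹, ?_⟩
    rw [TwoSidedIdeal.mem_bot]
    have h1 : (↑u⁻¹ : R) * (y * x + 1) = 1 := by rw [← hu]; exact u.inv_mul
    calc (↑u⁻¹ : R) * y * x + ↑u⁻¹ - 1 = ↑u⁻¹ * (y * x + 1) - 1 := by noncomm_ring
    _ = 0 := by rw [h1, sub_self]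
  -- the quotient R ⧸ lAnn F₀ is semisimple
  set I : Ideal R := lAnnI R (↑F₀ : Set R) with hI
  haveI hsimple : ∀ k : {k : R // k ∈ F₀},
      IsSimpleModule R (R ⧸ lAnnI R ({(k : R)} : Set R)) :=
    fun k => isSimpleModule_iff_isCoatom.mpr (coatom_lAnn hmin (hF₀G k k.2))
  let π : R →ₗ[R] ((k : {k : R // k ∈ F₀}) → R ⧸ lAnnI R ({(k : R)} : Set R)) :=
    LinearMap.pi fun k => (lAnnI R ({(k : R)} : Set R)).mkQ
  have hIker : I ≤ LinearMap.ker π := by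
    intro x hx
    rw [LinearMap.mem_ker]
    funext k
    show (lAnnI R ({(k : R)} : Set R)).mkQ x = 0
    rw [Submodule.mkQ_apply, Submodule.Quotient.mk_eq_zero]
    rintro z rfl
    exact hx (k : R) k.2
  have hker' : LinearMap.ker π ≤ I := by
    intro x hx
    rw [mem_lAnnI]
    intro z hz
    have h0 := congrFun (LinearMap.mem_ker.mp hx) ⟨z, hz⟩
    have hxz : x ∈ lAnnI R ({z} : Set R) := by
      rw [← Submodule.Quotient.mk_eq_zero]
      exact h0
    exact hxz z rfl
  haveI : IsSemisimpleModule R ((k : {k : R // k ∈ F₀}) → R ⧸ lAnnI R ({(k : R)} : Set R)) :=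
    pi_semisimple _
  haveI hssI : IsSemisimpleModule R (R ⧸ I) := by
    have hinj : Function.Injective (I.liftQ π hIker) := by
      rw [← LinearMap.ker_eq_bot]
      exact Submodule.ker_liftQ_eq_bot _ _ _ hker'
    have e := LinearEquiv.ofInjective _ hinj
    haveI : ComplementedLattice
        (Submodule R (LinearMap.range (I.liftQ π hIker))) :=
      (isSemisimpleModule_iff R (LinearMap.range (I.liftQ π hIker))).mp inferInstance
    exact (isSemisimpleModule_iff R (R ⧸ I)).mpr (Submodule.orderIsoMapComap e).symm.complementedLattice
  -- complement argument
  obtain ⟨Q, hQ⟩ := exists_isCompl (Submodule.map I.mkQ (Submodule.span R {a}))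
  have h1 : I.mkQ 1 ∈ (Submodule.map I.mkQ (Submodule.span R {a})) ⊔ Q := by
    rw [hQ.sup_eq_top]; trivial
  obtain ⟨p, hp, q, hq, hpq⟩ := Submodule.mem_sup.mp h1
  obtain ⟨y, hy, hyp⟩ := hp
  obtain ⟨x, hx⟩ := Submodule.mem_span_singleton.mp hy
  have hxy : I.mkQ (x * a) = p := by rw [← hyp, ← hx]; rfl
  have hq' : I.mkQ (1 - x * a) ∈ Q := by
    have h2 : I.mkQ (1 - x * a) = q := by
      rw [map_sub, hxy, ← hpq]
      abel
    rw [h2]; exact hq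
  refine ⟨x, hLJ (a - a * x * a) ?_⟩
  have hmem : I.mkQ (a - a * x * a) ∈ (Submodule.map I.mkQ (Submodule.span R {a})) ⊓ Q := by
    constructor
    · refine ⟨a - a * x * a, Submodule.mem_span_singleton.mpr ⟨1 - a * x, ?_⟩, rfl⟩
      rw [sub_smul, one_smul, smul_eq_mul, mul_assoc]
    · have h2 : I.mkQ (a - a * x * a) = a • I.mkQ (1 - x * a) := by
        rw [← map_smul, smul_eq_mul, mul_sub, mul_one, ← mul_assoc]
      rw [h2]
      exact Q.smul_mem a hq'
  rw [hQ.inf_eq_bot, Submodule.mem_bot] at hmem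
  have hfin : a - a * x * a ∈ I := by
    rwa [Submodule.mkQ_apply, Submodule.Quotient.mk_eq_zero] at hmem
  exact hfin
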